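/- arXiv:2406.19473 — 2 statements merged into one kernel-verified Lean document; each statement's English description precedes it below -/
import Mathlib

section
/- Let p be a prime and n ≥ 1 with p > n. Let γ(t) = (t, t²/2!, ..., t^n/n!) be the moment curve in Q_p^n. Then for all s, t in Z_p and every 1 ≤ k ≤ n-1, the p-adic absolute value of the determinant of the n×n matrix whose columns are γ'(t), ..., γ^{(k)}(t), γ'(s), ..., γ^{(n-k)}(s) equals |s - t|_p^{k(n-k)}. -/
/-- The i-th coordinate (1-indexed via `i+1`) of the j-th derivative of the moment curve
`γ(t) = (t/1!, ..., t^n/n!)` in `ℚ_p^n`:  `γ^{(j)}(t)_i = t^{i-j}/(i-j)!` if `i ≥ j`, else 0. -/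
noncomputable def momentDeriv (p : ℕ) [Fact p.Prime] (n : ℕ) (j : ℕ) (t : ℚ_[p]) :
    Fin n → ℚ_[p] :=
  fun i => if j ≤ (i : ℕ) + 1 then t ^ ((i : ℕ) + 1 - j) / ((i : ℕ) + 1 - j).factorial else 0

section Aux

open Finset

variable {p : ℕ} [hp : Fact p.Prime]

lemma norm_nat_eq_one {x : ℕ} (hx : ¬ (p ∣ x)) : ‖(x : ℚ_[p])‖ = 1 := by
  have h1 : ‖((x:ℤ) : ℚ_[p])‖ ≤ 1 := Padic.norm_int_le_one _
  have h2 : ¬ ‖((x:ℤ) : ℚ_[p])‖ < 1 := by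
    rw [Padic.norm_intCast_lt_one_iff]
    exact_mod_cast hx
  push_cast at h1 h2
  exact le_antisymm h1 (not_lt.mp h2)

lemma norm_factorial_eq_one {N : ℕ} (hN : N < p) : ‖(N.factorial : ℚ_[p])‖ = 1 :=
  norm_nat_eq_one (by rw [hp.out.dvd_factorial]; omega)

lemma sum_div_factorial (t h : ℚ_[p]) (N : ℕ) :
    ∑ a ∈ Finset.range (N+1), h ^ a / a.factorial * (t ^ (N - a) / (N - a).factorial)
      = (t + h) ^ N / N.factorial := by
  rw [add_comm t h, add_pow, Finset.sum_div]
  refine Finset.sum_congr rfl fun a ha => ?_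
  rw [Finset.mem_range] at ha
  have ha' : a ≤ N := Nat.lt_succ_iff.mp ha
  have key : ((N.choose a : ℚ_[p])) * (a.factorial) * ((N - a).factorial) = N.factorial := by
    exact_mod_cast congrArg (Nat.cast : ℕ → ℚ_[p]) (Nat.choose_mul_factorial_mul_factorial ha')
  have h1 : ((a.factorial : ℚ_[p])) ≠ 0 := Nat.cast_ne_zero.mpr a.factorial_ne_zero
  have h2 : (((N-a).factorial : ℚ_[p])) ≠ 0 := Nat.cast_ne_zero.mpr (N-a).factorial_ne_zero
  have h3 : ((N.factorial : ℚ_[p])) ≠ 0 := Nat.cast_ne_zero.mpr N.factorial_ne_zero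
  field_simp
  linear_combination (-(h ^ a * t ^ (N - a))) * key


lemma moment_taylor (n J : ℕ) (hJ : 1 ≤ J) (t h : ℚ_[p]) (i : Fin n) :
    ∑ r : Fin n, momentDeriv p n ((r:ℕ)+1) t i * momentDeriv p n J h r
      = momentDeriv p n J (t + h) i := by
  simp only [momentDeriv]
  rw [Fin.sum_univ_eq_sum_range (fun r => (if r + 1 ≤ (i:ℕ) + 1 then
      t ^ ((i:ℕ) + 1 - (r + 1)) / ((i:ℕ) + 1 - (r + 1)).factorial else 0) *
      (if J ≤ r + 1 then h ^ (r + 1 - J) / (r + 1 - J).factorial else 0)) n]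
  rcases le_or_gt J ((i:ℕ)+1) with hJi | hJi
  · rw [if_pos hJi]
    have step1 : ∀ r ∈ Finset.range n, (if r + 1 ≤ (i:ℕ) + 1 then
        t ^ ((i:ℕ) + 1 - (r + 1)) / ((i:ℕ) + 1 - (r + 1)).factorial else 0) *
        (if J ≤ r + 1 then h ^ (r + 1 - J) / (r + 1 - J).factorial else 0)
        = if r ∈ Finset.Icc (J-1) (i:ℕ) then
            h ^ (r + 1 - J) / (r + 1 - J).factorial *
            (t ^ ((i:ℕ) - r) / ((i:ℕ) - r).factorial) else 0 := by
      intro r _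
      by_cases h1 : r ≤ (i:ℕ)
      · by_cases h2 : J ≤ r + 1
        · rw [if_pos (by omega : r + 1 ≤ (i:ℕ) + 1), if_pos h2,
              if_pos (Finset.mem_Icc.mpr ⟨by omega, h1⟩),
              show (i:ℕ) + 1 - (r + 1) = (i:ℕ) - r from by omega, mul_comm]
        · rw [if_neg h2, mul_zero, if_neg (by rw [Finset.mem_Icc]; omega)]
      · rw [if_neg (by omega), zero_mul, if_neg (by rw [Finset.mem_Icc]; omega)]
    rw [Finset.sum_congr rfl step1, Finset.sum_ite_mem,
      Finset.inter_eq_right.mpr (fun r hr => by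
        rw [Finset.mem_Icc] at hr; exact Finset.mem_range.mpr (by have := i.isLt; omega)),
      show Finset.Icc (J-1) (i:ℕ) = Finset.Ico (J-1) ((i:ℕ)+1) from (Finset.Ico_add_one_right_eq_Icc _ _).symm,
      Finset.sum_Ico_eq_sum_range]
    have hN : (i:ℕ) + 1 - (J - 1) = ((i:ℕ) + 1 - J) + 1 := by omega
    rw [hN]
    rw [← sum_div_factorial t h ((i:ℕ)+1-J)]
    refine Finset.sum_congr rfl fun a ha => ?_
    rw [Finset.mem_range] at ha
    rw [show J - 1 + a + 1 - J = a from by omega,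
        show (i:ℕ) - (J - 1 + a) = (i:ℕ) + 1 - J - a from by omega]
  · rw [if_neg (not_le.mpr hJi)]
    apply Finset.sum_eq_zero
    intro r _
    rcases le_or_gt J (r+1) with h1 | h1
    · rw [if_neg (by omega), zero_mul]
    · rw [if_neg (not_le.mpr h1), mul_zero]


end Aux

/-- p-adic Vandermonde identity.  For `p > n`, `1 ≤ k ≤ n-1`, `s, t ∈ ℤ_p`,
the determinant of the matrix with columns `γ'(t),...,γ^{(k)}(t),γ'(s),...,γ^{(n-k)}(s)`
has p-adic absolute value `|s - t|_p^{k(n-k)}`. -/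
theorem padic_vandermonde (p n : ℕ) [Fact p.Prime] (hn : 1 ≤ n) (hpn : n < p)
    (k : ℕ) (hk1 : 1 ≤ k) (hk2 : k ≤ n - 1) (s t : ℤ_[p]) :
    ‖(Matrix.of fun (i j : Fin n) =>
        if (j : ℕ) < k then momentDeriv p n ((j : ℕ) + 1) (t : ℚ_[p]) i
        else momentDeriv p n ((j : ℕ) - k + 1) (s : ℚ_[p]) i).det‖ =
      ‖(s : ℚ_[p]) - (t : ℚ_[p])‖ ^ (k * (n - k)) := by
  have hkn : k ≤ n := le_trans hk2 (Nat.sub_le n 1)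
  set m := n - k with hm
  have hkm : k + m = n := Nat.add_sub_cancel' hkn
  set h : ℚ_[p] := (s : ℚ_[p]) - (t : ℚ_[p]) with hh
  set M : Matrix (Fin n) (Fin n) ℚ_[p] := Matrix.of fun (i j : Fin n) =>
        if (j : ℕ) < k then momentDeriv p n ((j : ℕ) + 1) (t : ℚ_[p]) i
        else momentDeriv p n ((j : ℕ) - k + 1) (s : ℚ_[p]) i with hM
  set B : Matrix (Fin n) (Fin n) ℚ_[p] :=
    Matrix.of fun i r => momentDeriv p n ((r:ℕ)+1) (t:ℚ_[p]) i with hB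
  set C : Matrix (Fin n) (Fin n) ℚ_[p] := Matrix.of fun r j =>
    if (j:ℕ) < k then (if r = j then (1:ℚ_[p]) else 0)
    else momentDeriv p n ((j:ℕ)-k+1) h r with hC
  -- Step 1 : M = B * C
  have hMBC : M = B * C := by
    ext i j
    rw [Matrix.mul_apply]
    by_cases hj : (j:ℕ) < k
    · simp only [hM, hB, hC, Matrix.of_apply, if_pos hj, mul_ite, mul_one, mul_zero]
      rw [Finset.sum_ite_eq' Finset.univ j (fun r => momentDeriv p n ((r:ℕ)+1) (t:ℚ_[p]) i),
        if_pos (Finset.mem_univ j)]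
    · simp only [hM, hB, hC, Matrix.of_apply, if_neg hj]
      have := moment_taylor n ((j:ℕ)-k+1) le_add_self (t:ℚ_[p]) h i
      rw [show (t:ℚ_[p]) + h = (s:ℚ_[p]) by rw [hh]; ring] at this
      exact this.symm
  -- Step 2 : det B = 1
  have hdetB : B.det = 1 := by
    have htri : B.BlockTriangular OrderDual.toDual := by
      intro i j hij
      have hij' : (i:ℕ) < (j:ℕ) := hij
      simp only [hB, Matrix.of_apply, momentDeriv]
      rw [if_neg (by omega)]
    rw [Matrix.det_of_lowerTriangular B htri]
    refine Finset.prod_eq_one fun i _ => ?_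
    simp [hB, momentDeriv]
  -- Step 3 : det C = det D via block decomposition
  set e : Fin k ⊕ Fin m ≃ Fin n := finSumFinEquiv.trans (finCongr hkm) with he
  have he1 : ∀ a : Fin k, ((e (Sum.inl a) : Fin n) : ℕ) = (a:ℕ) := by
    intro a; simp [he, finSumFinEquiv_apply_left]
  have he2 : ∀ b : Fin m, ((e (Sum.inr b) : Fin n) : ℕ) = k + (b:ℕ) := by
    intro b; simp [he, finSumFinEquiv_apply_right]
  set D : Matrix (Fin m) (Fin m) ℚ_[p] := Matrix.of fun a b =>
    if (b:ℕ) ≤ k + (a:ℕ) then h ^ (k + (a:ℕ) - (b:ℕ)) / (k + (a:ℕ) - (b:ℕ)).factorial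
    else 0 with hD
  have hCD : C.det = D.det := by
    rw [← Matrix.det_submatrix_equiv_self e C]
    have hblocks : C.submatrix e e = Matrix.fromBlocks 1
        (Matrix.of fun a b => C (e (Sum.inl a)) (e (Sum.inr b))) 0 D := by
      ext i j
      cases i with
      | inl a =>
        cases j with
        | inl b =>
          simp only [Matrix.submatrix_apply, Matrix.fromBlocks_apply₁₁, hC, Matrix.of_apply,
            Matrix.one_apply]
          rw [if_pos (by rw [he1]; exact b.isLt)]
          by_cases hab : a = b
          · rw [if_pos (by rw [hab]), if_pos hab]
          · rw [if_neg (by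
              intro hcon
              exact hab (by
                apply Fin.ext
                have hv := congrArg Fin.val hcon
                rwa [he1, he1] at hv)), if_neg hab]
        | inr b => rfl
      | inr a =>
        cases j with
        | inl b =>
          simp only [Matrix.submatrix_apply, Matrix.fromBlocks_apply₂₁, hC, Matrix.of_apply,
            Matrix.zero_apply]
          rw [if_pos (by rw [he1]; exact b.isLt), if_neg (by
            intro hcon
            have hv := congrArg Fin.val hcon
            rw [he2, he1] at hv
            have := b.isLt
            omega)]
        | inr b =>
          simp only [Matrix.submatrix_apply, Matrix.fromBlocks_apply₂₂, hC, hD, Matrix.of_apply]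
          rw [if_neg (by rw [he2]; omega)]
          simp only [momentDeriv, he2]
          rw [show k + (b:ℕ) - k + 1 = (b:ℕ) + 1 from by omega]
          by_cases hba : (b:ℕ) ≤ k + (a:ℕ)
          · rw [if_pos (by omega), if_pos hba,
              show k + (a:ℕ) + 1 - ((b:ℕ)+1) = k + (a:ℕ) - (b:ℕ) from by omega]
          · rw [if_neg (by omega), if_neg hba]
    rw [hblocks, Matrix.det_fromBlocks_zero₂₁, Matrix.det_one, one_mul]
  -- Step 4 : det D = h^(k*m) * det E
  set E : Matrix (Fin m) (Fin m) ℚ_[p] := Matrix.of fun a b =>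
    if (b:ℕ) ≤ k + (a:ℕ) then (((k + (a:ℕ) - (b:ℕ)).factorial : ℚ_[p]))⁻¹ else 0 with hE
  have hDE : D.det = h ^ (k * m) * E.det := by
    rw [Matrix.det_apply', Matrix.det_apply', Finset.mul_sum]
    refine Finset.sum_congr rfl fun σ _ => ?_
    have key : ∏ i, D (σ i) i = h ^ (k*m) * ∏ i, E (σ i) i := by
      by_cases hσ : ∀ i : Fin m, (i:ℕ) ≤ k + ((σ i :Fin m):ℕ)
      · have hsum : ∑ i : Fin m, (k + ((σ i :Fin m):ℕ) - (i:ℕ)) = k * m := by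
          have hs1 : ∑ i : Fin m, (((σ i :Fin m):ℕ):ℤ) = ∑ i : Fin m, ((i:ℕ):ℤ) :=
            Equiv.sum_comp σ (fun i : Fin m => ((i:ℕ):ℤ))
          have hZ : ((∑ i : Fin m, (k + ((σ i :Fin m):ℕ) - (i:ℕ)) : ℕ) : ℤ) = ((k*m : ℕ) : ℤ) := by
            rw [Nat.cast_sum]
            rw [Finset.sum_congr rfl (fun i _ => Int.ofNat_sub (hσ i))]
            rw [Finset.sum_sub_distrib]
            push_cast
            rw [Finset.sum_add_distrib, hs1]
            simp [Finset.card_univ, mul_comm]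
          exact_mod_cast hZ
        calc ∏ i, D (σ i) i
            = ∏ i : Fin m, (h ^ (k + ((σ i :Fin m):ℕ) - (i:ℕ)) *
              (((k + ((σ i :Fin m):ℕ) - (i:ℕ)).factorial : ℚ_[p]))⁻¹) := by
              refine Finset.prod_congr rfl fun i _ => ?_
              simp only [hD, Matrix.of_apply]
              rw [if_pos (hσ i), div_eq_mul_inv]
          _ = (∏ i : Fin m, h ^ (k + ((σ i :Fin m):ℕ) - (i:ℕ))) *
              ∏ i : Fin m, (((k + ((σ i :Fin m):ℕ) - (i:ℕ)).factorial : ℚ_[p]))⁻¹ :=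
              Finset.prod_mul_distrib
          _ = h ^ (k*m) * ∏ i, E (σ i) i := by
              rw [Finset.prod_pow_eq_pow_sum, hsum]
              congr 1
              refine Finset.prod_congr rfl fun i _ => ?_
              simp only [hE, Matrix.of_apply]
              rw [if_pos (hσ i)]
      · push_neg at hσ
        obtain ⟨i, hi⟩ := hσ
        rw [Finset.prod_eq_zero (Finset.mem_univ i) (by
            simp only [hD, Matrix.of_apply]; rw [if_neg (by omega)]),
          Finset.prod_eq_zero (Finset.mem_univ i) (by
            simp only [hE, Matrix.of_apply]; rw [if_neg (by omega)]),
          mul_zero]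
    rw [key]; ring
  -- Step 5 : the determinant of E is a p-adic unit
  set G : Matrix (Fin m) (Fin m) ℚ_[p] :=
    Matrix.of fun a b => ((Nat.descFactorial (k + (a:ℕ)) (b:ℕ) : ℕ) : ℚ_[p]) with hG
  have hGE : G = Matrix.diagonal (fun a : Fin m => ((k + (a:ℕ)).factorial : ℚ_[p])) * E := by
    ext a b
    rw [Matrix.diagonal_mul]
    by_cases hba : (b:ℕ) ≤ k + (a:ℕ)
    · simp only [hG, hE, Matrix.of_apply]
      rw [if_pos hba]
      have hfac := Nat.factorial_mul_descFactorial hba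
      have hne : (((k + (a:ℕ) - (b:ℕ)).factorial : ℚ_[p])) ≠ 0 :=
        Nat.cast_ne_zero.mpr (Nat.factorial_ne_zero _)
      have hfac2 : (k + (a:ℕ)).descFactorial (b:ℕ) * (k + (a:ℕ) - (b:ℕ)).factorial
          = (k + (a:ℕ)).factorial := by rw [Nat.mul_comm]; exact hfac
      field_simp
      exact_mod_cast congrArg (Nat.cast : ℕ → ℚ_[p]) hfac2
    · simp only [hG, hE, Matrix.of_apply]
      rw [if_neg hba, mul_zero, Nat.descFactorial_eq_zero_iff_lt.mpr (by omega), Nat.cast_zero]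
  have hnormfact : ∀ a : Fin m, ‖((k + (a:ℕ)).factorial : ℚ_[p])‖ = 1 := by
    intro a
    exact norm_factorial_eq_one (by have := a.isLt; omega)
  have hdetG : (Matrix.vandermonde fun a : Fin m => ((k + (a:ℕ) : ℕ) : ℚ_[p])).det = G.det := by
    have hGpoly : G = Matrix.of fun a b : Fin m =>
        ((descPochhammer ℚ_[p] (b:ℕ)).eval ((k + (a:ℕ) : ℕ) : ℚ_[p])) := by
      ext a b
      simp only [hG, Matrix.of_apply]
      exact (descPochhammer_eval_eq_descFactorial ℚ_[p] (k + (a:ℕ)) (b:ℕ)).symm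
    rw [hGpoly]
    exact Matrix.det_eval_matrixOfPolynomials_eq_det_vandermonde _ _
      (fun i => descPochhammer_natDegree ℚ_[p] (i:ℕ)) (fun i => monic_descPochhammer ℚ_[p] (i:ℕ))
  have hdetGnorm : ‖G.det‖ = 1 := by
    rw [← hdetG, Matrix.det_vandermonde, norm_prod]
    refine Finset.prod_eq_one fun i _ => ?_
    rw [norm_prod]
    refine Finset.prod_eq_one fun j hj => ?_
    rw [Finset.mem_Ioi] at hj
    have hij : (i:ℕ) < (j:ℕ) := hj
    have hcast : ((k + (j:ℕ) : ℕ) : ℚ_[p]) - ((k + (i:ℕ) : ℕ) : ℚ_[p])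
        = (((j:ℕ) - (i:ℕ) : ℕ) : ℚ_[p]) := by
      push_cast [Nat.cast_sub hij.le]
      ring
    rw [hcast]
    refine norm_nat_eq_one fun hdvd => ?_
    have h0 : 0 < (j:ℕ) - (i:ℕ) := by omega
    have := Nat.le_of_dvd h0 hdvd
    have := j.isLt
    omega
  have hdetE : ‖E.det‖ = 1 := by
    have hGdet : G.det = (∏ a : Fin m, ((k + (a:ℕ)).factorial : ℚ_[p])) * E.det := by
      rw [hGE, Matrix.det_mul, Matrix.det_diagonal]
    have hprod : ‖∏ a : Fin m, ((k + (a:ℕ)).factorial : ℚ_[p])‖ = 1 := by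
      rw [norm_prod]
      exact Finset.prod_eq_one fun a _ => hnormfact a
    have := congrArg norm hGdet
    rw [norm_mul, hprod, one_mul, hdetGnorm] at this
    exact this.symm
  -- Conclusion
  rw [hMBC, Matrix.det_mul, hdetB, one_mul, hCD, hDE, norm_mul, norm_pow, hdetE, mul_one]
end

section
/- p-adic Fourier slicing: let f be a Schwartz–Bruhat function on Q_p^n whose Fourier transform is supported in a set Ω ⊆ Q_p^n. Let H ⊆ Q_p^n be a k-dimensional linear subspace, B : Q_p^k → Q_p^n a linear isomorphism onto H, and z ∈ Q_p^n. Define f^z : Q_p^k → ℂ by f^z(y) = f(B(y) + z). Then the Fourier transform of f^z is supported in the set B^⊤[Ω] = {B^⊤ ξ : ξ ∈ Ω}. -/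
open MeasureTheory

noncomputable def padicFT {p : ℕ} [Fact p.Prime] {d : ℕ} [MeasurableSpace ℚ_[p]]
    (μ : Measure (Fin d → ℚ_[p])) (e : AddChar ℚ_[p] Circle)
    (f : (Fin d → ℚ_[p]) → ℂ) (ξ : Fin d → ℚ_[p]) : ℂ :=
  ∫ x, (e (-(∑ i, x i * ξ i)) : ℂ) * f x ∂μ

namespace PFS17

variable {p : ℕ} [hp : Fact p.Prime]

/-- The coordinatewise ball of radius `p^c` in `ℚ_p^d`. -/
def VB (d : ℕ) (c : ℤ) : Set (Fin d → ℚ_[p]) := {x | ∀ i, ‖x i‖ ≤ (p : ℝ) ^ c}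

section basic

variable {d : ℕ}

lemma one_lt_p : (1 : ℝ) < p := by exact_mod_cast hp.out.one_lt

lemma p_pos : (0 : ℝ) < p := lt_trans one_pos one_lt_p

lemma zpow_p_pos (c : ℤ) : (0 : ℝ) < (p : ℝ) ^ c := zpow_pos p_pos c

lemma mem_VB {c : ℤ} {x : Fin d → ℚ_[p]} : x ∈ VB (p := p) d c ↔ ∀ i, ‖x i‖ ≤ (p : ℝ) ^ c :=
  Iff.rfl

lemma zero_mem_VB (c : ℤ) : (0 : Fin d → ℚ_[p]) ∈ VB (p := p) d c := fun i => by
  simp [le_of_lt (zpow_p_pos c)]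

lemma add_mem_VB {c : ℤ} {x y : Fin d → ℚ_[p]} (hx : x ∈ VB (p := p) d c) (hy : y ∈ VB (p := p) d c) :
    x + y ∈ VB (p := p) d c := fun i =>
  le_trans (Padic.nonarchimedean _ _) (max_le (hx i) (hy i))

lemma neg_mem_VB {c : ℤ} {x : Fin d → ℚ_[p]} (hx : x ∈ VB (p := p) d c) : -x ∈ VB (p := p) d c := fun i => by
  simpa using hx i

lemma sub_mem_VB {c : ℤ} {x y : Fin d → ℚ_[p]} (hx : x ∈ VB (p := p) d c) (hy : y ∈ VB (p := p) d c) :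
    x - y ∈ VB (p := p) d c := by
  rw [sub_eq_add_neg]; exact add_mem_VB hx (neg_mem_VB hy)

lemma VB_mono {c c' : ℤ} (h : c ≤ c') : VB (p := p) d c ⊆ VB (p := p) d c' := fun x hx i =>
  (hx i).trans (zpow_le_zpow_right₀ one_lt_p.le h)

lemma isClosed_VB {c : ℤ} : IsClosed (VB (p := p) d c) := by
  have : VB (p := p) d c = ⋂ i, {x : Fin d → ℚ_[p] | ‖x i‖ ≤ (p : ℝ) ^ c} := by
    ext x; simp [VB, Set.mem_iInter]
  rw [this]
  exact isClosed_iInter fun i => isClosed_le ((continuous_apply i).norm) continuous_const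

lemma isOpen_VB {c : ℤ} : IsOpen (VB (p := p) d c) := by
  have : VB (p := p) d c = ⋂ i, {x : Fin d → ℚ_[p] | ‖x i‖ < (p : ℝ) ^ (c + 1)} := by
    ext x
    simp only [VB, Set.mem_iInter, Set.mem_setOf_eq]
    exact forall_congr' fun i => Padic.norm_le_pow_iff_norm_lt_pow_add_one _ _
  rw [this]
  exact isOpen_iInter_of_finite fun i => isOpen_lt ((continuous_apply i).norm) continuous_const

lemma isCompact_VB {c : ℤ} : IsCompact (VB (p := p) d c) := by
  refine Metric.isCompact_of_isClosed_isBounded isClosed_VB ?_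
  refine (Metric.isBounded_closedBall (x := (0 : Fin d → ℚ_[p])) (r := (p : ℝ) ^ c)).subset ?_
  intro x hx
  rw [Metric.mem_closedBall]
  refine (dist_pi_le_iff (le_of_lt (zpow_p_pos c))).2 fun i => ?_
  simpa [dist_eq_norm] using hx i

lemma measurableSet_VB [MeasurableSpace ℚ_[p]] [BorelSpace ℚ_[p]] {c : ℤ} :
    MeasurableSet (VB (p := p) d c) := isClosed_VB.measurableSet

lemma norm_sum_le_one (g : Fin d → ℚ_[p]) (h : ∀ i, ‖g i‖ ≤ 1) : ‖∑ i, g i‖ ≤ 1 := by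
  rcases (Finset.univ : Finset (Fin d)).eq_empty_or_nonempty with h0 | h0
  · simp [h0]
  · exact IsUltrametricDist.norm_sum_le_of_forall_le_of_nonempty h0 fun i _ => h i

end basic

section char

variable {d : ℕ}

lemma e_add (e : AddChar ℚ_[p] Circle) (a b : ℚ_[p]) :
    (e (a + b) : ℂ) = (e a : ℂ) * (e b : ℂ) := by
  rw [AddChar.map_add_eq_mul, Circle.coe_mul]

lemma e_norm (e : AddChar ℚ_[p] Circle) (a : ℚ_[p]) : ‖(e a : ℂ)‖ = 1 := by
  rw [Circle.norm_coe]

lemma e_ne_zero (e : AddChar ℚ_[p] Circle) (a : ℚ_[p]) : (e a : ℂ) ≠ 0 := by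
  intro h
  have := e_norm e a
  rw [h] at this; simp at this

lemma e_cont (e : AddChar ℚ_[p] Circle) (he1 : ∀ x : ℚ_[p], ‖x‖ ≤ 1 → e x = 1) :
    Continuous fun x : ℚ_[p] => (e x : ℂ) := by
  have : IsLocallyConstant fun x : ℚ_[p] => (e x : ℂ) := by
    rw [IsLocallyConstant.iff_exists_open]
    intro x
    refine ⟨{y : ℚ_[p] | ‖y - x‖ < (p : ℝ) ^ ((0 : ℤ) + 1)}, 
      isOpen_lt ((continuous_id.sub continuous_const).norm) continuous_const, ?_, ?_⟩
    · show ‖x - x‖ < _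
      rw [sub_self, norm_zero]
      exact zpow_p_pos _
    · intro y hy
      have h1 : ‖y - x‖ ≤ (p : ℝ) ^ (0 : ℤ) :=
        (Padic.norm_le_pow_iff_norm_lt_pow_add_one _ _).2 hy
      have h2 : e (y - x) = 1 := he1 _ (by simpa using h1)
      have : e y = e x * e (y - x) := by
        rw [← AddChar.map_add_eq_mul]; ring_nf
      rw [this, h2, mul_one]
  exact this.continuous

lemma e_sum_eq_one (e : AddChar ℚ_[p] Circle) (he1 : ∀ x : ℚ_[p], ‖x‖ ≤ 1 → e x = 1)
    (g : Fin d → ℚ_[p]) (h : ∀ i, ‖g i‖ ≤ 1) : e (∑ i, g i) = 1 :=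
  he1 _ (norm_sum_le_one g h)

variable [MeasurableSpace ℚ_[p]] [BorelSpace ℚ_[p]]

/-- Orthogonality of characters on the compact open subgroup `VB d c`. -/
lemma orth (μ : Measure (Fin d → ℚ_[p])) [μ.IsAddHaarMeasure]
    (e : AddChar ℚ_[p] Circle) (he1 : ∀ x : ℚ_[p], ‖x‖ ≤ 1 → e x = 1)
    (he2 : ∃ x : ℚ_[p], ‖x‖ ≤ (p : ℝ) ∧ e x ≠ 1) (w : Fin d → ℚ_[p]) (c : ℤ) :
    ∫ x in VB (p := p) d c, (e (∑ i, w i * x i) : ℂ) ∂μ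
      = if ∀ i, ‖w i‖ ≤ (p : ℝ) ^ (-c) then (((μ (VB (p := p) d c)).toReal : ℝ) : ℂ) else 0 := by
  split_ifs with hw
  · rw [setIntegral_congr_fun measurableSet_VB (g := fun _ => (1 : ℂ))]
    · rw [setIntegral_const]; rw [Complex.real_smul, mul_one]; rfl
    · intro x hx
      have h1 : e (∑ i, w i * x i) = 1 := by
        refine e_sum_eq_one e he1 _ fun i => ?_
        rw [norm_mul]
        calc ‖w i‖ * ‖x i‖ ≤ (p : ℝ) ^ (-c) * (p : ℝ) ^ c := by
              exact mul_le_mul (hw i) (hx i) (norm_nonneg _) (le_of_lt (zpow_p_pos _))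
          _ = 1 := by
              rw [← zpow_add₀ (ne_of_gt (p_pos (p := p)))]; simp
      simp only [h1, Circle.coe_one]
  · push_neg at hw
    obtain ⟨i, hi⟩ := hw
    obtain ⟨x₀, hx₀, hex₀⟩ := he2
    have hwi : (p : ℝ) ^ (-c + 1) ≤ ‖w i‖ := by
      by_contra h
      push_neg at h
      exact absurd ((Padic.norm_le_pow_iff_norm_lt_pow_add_one _ _).2 h) (not_le.2 hi)
    have hwpos : (0 : ℝ) < ‖w i‖ := lt_of_lt_of_le (zpow_p_pos _) hwi
    have hwne : w i ≠ 0 := by simpa [norm_pos_iff] using hwpos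
    set t : ℚ_[p] := x₀ / w i with ht_def
    have ht : ‖t‖ ≤ (p : ℝ) ^ c := by
      rw [ht_def, norm_div]
      have h2 : (p : ℝ) / (p : ℝ) ^ (-c + 1) = (p : ℝ) ^ c := by
        rw [eq_comm, eq_div_iff (ne_of_gt (zpow_p_pos _)), ← zpow_add₀ (ne_of_gt (p_pos (p := p)))]
        norm_num
      calc ‖x₀‖ / ‖w i‖ ≤ (p : ℝ) / (p : ℝ) ^ (-c + 1) :=
            div_le_div₀ (le_of_lt (p_pos (p := p))) hx₀ (zpow_p_pos _) hwi
        _ = (p : ℝ) ^ c := h2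
    set ξ₀ : Fin d → ℚ_[p] := Pi.single i t with hξ₀_def
    have hξ₀ : ξ₀ ∈ VB (p := p) d c := by
      intro j
      simp only [hξ₀_def, Pi.single_apply]
      split_ifs with hj
      · exact ht
      · simp [le_of_lt (zpow_p_pos c)]
    have hval : (∑ j, w j * ξ₀ j) = x₀ := by
      rw [hξ₀_def]
      have : (∑ j, w j * (Pi.single (M := fun _ : Fin d => ℚ_[p]) i t) j) = w i * t := by
        simp [Pi.single_apply, mul_ite]
      rw [this, ht_def, mul_div_cancel₀ _ hwne]
    set F : (Fin d → ℚ_[p]) → ℂ :=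
      (VB (p := p) d c).indicator (fun x => (e (∑ i, w i * x i) : ℂ)) with hF
    have key : ∀ x, F (x + ξ₀) = (e x₀ : ℂ) * F x := by
      intro x
      by_cases hx : x ∈ VB (p := p) d c
      · have hx' : x + ξ₀ ∈ VB (p := p) d c := add_mem_VB hx hξ₀
        rw [hF]
        simp only [Set.indicator_of_mem hx, Set.indicator_of_mem hx']
        have harg : (∑ j, w j * (x + ξ₀) j) = x₀ + ∑ j, w j * x j := by
          have : (∑ j, w j * (x + ξ₀) j) = (∑ j, w j * x j) + ∑ j, w j * ξ₀ j := by
            rw [← Finset.sum_add_distrib]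
            exact Finset.sum_congr rfl fun j _ => by
              show w j * (x j + ξ₀ j) = _
              ring
          rw [this, hval, add_comm]
        rw [harg, e_add]
      · have hx' : x + ξ₀ ∉ VB (p := p) d c := by
          intro h
          exact hx (by simpa using add_mem_VB h (neg_mem_VB hξ₀))
        rw [hF]
        simp [Set.indicator_of_notMem hx, Set.indicator_of_notMem hx']
    have h1 : ∫ x, F x ∂μ = (e x₀ : ℂ) * ∫ x, F x ∂μ := by
      conv_lhs => rw [← integral_add_right_eq_self F ξ₀]
      simp_rw [key]
      rw [integral_const_mul]
    have h2 : ∫ x, F x ∂μ = 0 := by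
      have hsub : ((e x₀ : ℂ) - 1) * ∫ x, F x ∂μ = 0 := by
        rw [sub_mul, one_mul, ← h1, sub_self]
      rcases mul_eq_zero.1 hsub with h' | h'
      · exact absurd (Circle.coe_eq_one.1 (by rwa [sub_eq_zero] at h')) hex₀
      · exact h'
    rw [← integral_indicator measurableSet_VB]
    exact h2

end char

section lc

variable {d : ℕ}

lemma unif_lc (f : (Fin d → ℚ_[p]) → ℂ) (hlc : IsLocallyConstant f)
    (hcs : HasCompactSupport f) :
    ∃ m : ℕ, ∀ x v, v ∈ VB (p := p) d (-(m : ℤ)) → f (x + v) = f x := by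
  have step : ∀ x : Fin d → ℚ_[p], ∃ j : ℕ,
      ∀ v ∈ VB (p := p) d (-(j : ℤ)), f (x + v) = f x := by
    intro x
    obtain ⟨U, hUo, hxU, hU⟩ := (IsLocallyConstant.iff_exists_open f).1 hlc x
    obtain ⟨ε, hε, hball⟩ := Metric.isOpen_iff.1 hUo x hxU
    obtain ⟨j, hj⟩ := exists_pow_lt_of_lt_one hε (show (p : ℝ)⁻¹ < 1 from inv_lt_one_of_one_lt₀ one_lt_p)
    refine ⟨j, fun v hv => hU _ (hball ?_)⟩
    rw [Metric.mem_ball]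
    have h1 : dist (x + v) x ≤ (p : ℝ) ^ (-(j : ℤ)) := by
      refine (dist_pi_le_iff (le_of_lt (zpow_p_pos _))).2 fun i => ?_
      rw [dist_eq_norm]
      have h2 : (x + v) i - x i = v i := by simp
      rw [h2]; exact hv i
    have h2 : ((p : ℝ)) ^ (-(j : ℤ)) = ((p : ℝ)⁻¹) ^ j := by
      rw [zpow_neg, zpow_natCast, ← inv_pow]
    rw [h2] at h1
    exact lt_of_le_of_lt h1 hj
  choose j hj using step
  set U : (Fin d → ℚ_[p]) → Set (Fin d → ℚ_[p]) :=
    fun x => {y | y - x ∈ VB (p := p) d (-(j x : ℤ))} with hU_def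
  have hUopen : ∀ x, IsOpen (U x) :=
    fun x => isOpen_VB.preimage (continuous_id.sub continuous_const)
  have hcover : tsupport f ⊆ ⋃ x, U x := fun x _ => Set.mem_iUnion.2 ⟨x, by
    show x - x ∈ VB (p := p) d _
    rw [sub_self]; exact zero_mem_VB _⟩
  obtain ⟨s, hs⟩ := hcs.elim_finite_subcover U hUopen hcover
  set m : ℕ := s.sup j with hm_def
  have hmono : ∀ x ∈ s, VB (p := p) d (-(m : ℤ)) ⊆ VB (p := p) d (-(j x : ℤ)) := fun x hx =>
    VB_mono (by exact_mod_cast neg_le_neg (Int.ofNat_le.2 (Finset.le_sup hx)))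
  have key : ∀ x ∈ tsupport f, ∀ v ∈ VB (p := p) d (-(m : ℤ)), f (x + v) = f x := by
    intro x hx v hv
    obtain ⟨x', hx's, hxU⟩ : ∃ x' ∈ s, x ∈ U x' := by
      have := hs hx
      simpa using this
    have h1 : x - x' ∈ VB (p := p) d (-(j x' : ℤ)) := hxU
    have h2 : (x + v) - x' ∈ VB (p := p) d (-(j x' : ℤ)) := by
      have h3 : (x + v) - x' = (x - x') + v := by ring
      rw [h3]; exact add_mem_VB h1 (hmono x' hx's hv)
    have e1 : f x = f x' := by
      have h4 := hj x' (x - x') h1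
      rw [add_sub_cancel] at h4
      exact h4
    have e2 : f (x + v) = f x' := by
      have h4 := hj x' ((x + v) - x') h2
      rw [add_sub_cancel] at h4
      exact h4
    rw [e1, e2]
  refine ⟨m, fun x v hv => ?_⟩
  by_cases hx : x ∈ tsupport f
  · exact key x hx v hv
  · by_cases hxv : x + v ∈ tsupport f
    · have h5 := key _ hxv (-v) (neg_mem_VB hv)
      have h6 : (x + v) + (-v) = x := by ring
      rw [h6] at h5
      exact h5.symm
    · rw [image_eq_zero_of_notMem_tsupport hx, image_eq_zero_of_notMem_tsupport hxv]

lemma bounded_subset_VB {s : Set (Fin d → ℚ_[p])} (hs : Bornology.IsBounded s) :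
    ∃ r : ℤ, s ⊆ VB (p := p) d r := by
  obtain ⟨R, hR⟩ := hs.subset_closedBall 0
  obtain ⟨r, hr⟩ := pow_unbounded_of_one_lt R (one_lt_p (p := p))
  refine ⟨(r : ℤ), fun x hx i => ?_⟩
  have h1 : ‖x‖ ≤ R := by
    have := hR hx
    rwa [Metric.mem_closedBall, dist_zero_right] at this
  calc ‖x i‖ ≤ ‖x‖ := norm_le_pi_norm x i
    _ ≤ R := h1
    _ ≤ (p : ℝ) ^ (r : ℕ) := le_of_lt hr
    _ = (p : ℝ) ^ (r : ℤ) := (zpow_natCast _ _).symm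

end lc

section ft

variable {d : ℕ} [MeasurableSpace ℚ_[p]] [BorelSpace ℚ_[p]]

lemma ft_eq_setIntegral (μ : Measure (Fin d → ℚ_[p])) (e : AddChar ℚ_[p] Circle)
    (f : (Fin d → ℚ_[p]) → ℂ) (r : ℤ) (hr : ∀ x, f x ≠ 0 → x ∈ VB (p := p) d r)
    (ξ : Fin d → ℚ_[p]) :
    padicFT μ e f ξ = ∫ x in VB (p := p) d r, (e (-(∑ i, x i * ξ i)) : ℂ) * f x ∂μ := by
  refine (setIntegral_eq_integral_of_forall_compl_eq_zero fun x hx => ?_).symm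
  have : f x = 0 := by
    by_contra h
    exact hx (hr x h)
  rw [this, mul_zero]

lemma ft_isLocallyConstant (μ : Measure (Fin d → ℚ_[p]))
    (e : AddChar ℚ_[p] Circle) (he1 : ∀ x : ℚ_[p], ‖x‖ ≤ 1 → e x = 1)
    (f : (Fin d → ℚ_[p]) → ℂ) (r : ℤ) (hr : ∀ x, f x ≠ 0 → x ∈ VB (p := p) d r) :
    IsLocallyConstant (padicFT μ e f) := by
  have shift : ∀ ξ δ, δ ∈ VB (p := p) d (-r) →
      padicFT μ e f (ξ + δ) = padicFT μ e f ξ := by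
    intro ξ δ hδ
    simp only [padicFT]
    refine integral_congr_ae (Filter.Eventually.of_forall fun x => ?_)
    show (e (-(∑ i, x i * (ξ + δ) i)) : ℂ) * f x = (e (-(∑ i, x i * ξ i)) : ℂ) * f x
    by_cases hfx : f x = 0
    · rw [hfx, mul_zero, mul_zero]
    · have hx := hr x hfx
      have harg : -(∑ i, x i * (ξ + δ) i) = (-(∑ i, x i * ξ i)) + (-(∑ i, x i * δ i)) := by
        rw [← neg_add, ← Finset.sum_add_distrib]
        congr 1
        refine Finset.sum_congr rfl fun i _ => ?_
        show x i * (ξ i + δ i) = _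
        ring
      rw [harg, e_add]
      have h1 : e (-(∑ i, x i * δ i)) = 1 := by
        refine he1 _ ?_
        rw [norm_neg]
        refine norm_sum_le_one _ fun i => ?_
        rw [norm_mul]
        calc ‖x i‖ * ‖δ i‖ ≤ (p : ℝ) ^ r * (p : ℝ) ^ (-r) :=
              mul_le_mul (hx i) (hδ i) (norm_nonneg _) (le_of_lt (zpow_p_pos _))
          _ = 1 := by rw [← zpow_add₀ (ne_of_gt (p_pos (p := p)))]; simp
      rw [h1, Circle.coe_one, mul_one]
  rw [IsLocallyConstant.iff_exists_open]
  intro ξ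
  refine ⟨{ζ | ζ - ξ ∈ VB (p := p) d (-r)},
    isOpen_VB.preimage (continuous_id.sub continuous_const), ?_, fun ζ hζ => ?_⟩
  · show ξ - ξ ∈ VB (p := p) d (-r)
    rw [sub_self]; exact zero_mem_VB _
  · have h2 := shift ξ (ζ - ξ) hζ
    rwa [add_sub_cancel] at h2

lemma swap_int {d₁ d₂ : ℕ} (μ : Measure (Fin d₁ → ℚ_[p])) [μ.IsAddHaarMeasure]
    (ν : Measure (Fin d₂ → ℚ_[p])) [ν.IsAddHaarMeasure]
    {s : Set (Fin d₁ → ℚ_[p])} {t : Set (Fin d₂ → ℚ_[p])} (hs : IsCompact s) (ht : IsCompact t)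
    (F : (Fin d₁ → ℚ_[p]) → (Fin d₂ → ℚ_[p]) → ℂ) (hF : Continuous (Function.uncurry F)) :
    ∫ a in s, ∫ b in t, F a b ∂ν ∂μ = ∫ b in t, ∫ a in s, F a b ∂μ ∂ν := by
  apply integral_integral_swap
  rw [Measure.prod_restrict]
  exact ContinuousOn.integrableOn_compact (hs.prod ht) hF.continuousOn

end ft

section inversion

variable {d : ℕ} [MeasurableSpace ℚ_[p]] [BorelSpace ℚ_[p]]

lemma inversion (μ : Measure (Fin d → ℚ_[p])) [μ.IsAddHaarMeasure]
    (e : AddChar ℚ_[p] Circle) (he1 : ∀ x : ℚ_[p], ‖x‖ ≤ 1 → e x = 1)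
    (he2 : ∃ x : ℚ_[p], ‖x‖ ≤ (p : ℝ) ∧ e x ≠ 1)
    (f : (Fin d → ℚ_[p]) → ℂ) (hf : Continuous f)
    (m r N : ℤ) (hm : ∀ x v, v ∈ VB (p := p) d (-m) → f (x + v) = f x)
    (hr : ∀ x, f x ≠ 0 → x ∈ VB (p := p) d r) (hN1 : m ≤ N) (hN2 : -r ≤ N)
    (x : Fin d → ℚ_[p]) :
    ∫ ξ in VB (p := p) d N, (e (∑ i, x i * ξ i) : ℂ) * padicFT μ e f ξ ∂μ
      = ((((μ (VB (p := p) d N)).toReal * (μ (VB (p := p) d (-N))).toReal : ℝ)) : ℂ) * f x := by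
  have ce := e_cont e he1
  set S : Set (Fin d → ℚ_[p]) := {u | ∀ i, ‖x i - u i‖ ≤ (p : ℝ) ^ (-N)} with hS_def
  have hSclosed : IsClosed S := by
    have h0 : S = ⋂ i, {u : Fin d → ℚ_[p] | ‖x i - u i‖ ≤ (p : ℝ) ^ (-N)} := by
      ext u; simp [hS_def, Set.mem_iInter]
    rw [h0]
    exact isClosed_iInter fun i =>
      isClosed_le ((continuous_const.sub (continuous_apply i)).norm) continuous_const
  have hSmeas : MeasurableSet S := hSclosed.measurableSet
  have cF : Continuous (Function.uncurry fun (ξ : Fin d → ℚ_[p]) (u : Fin d → ℚ_[p]) =>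
      (e (∑ i, x i * ξ i) : ℂ) * ((e (-(∑ i, u i * ξ i)) : ℂ) * f u)) := by
    apply Continuous.mul
    · exact ce.comp (continuous_finset_sum _ fun i _ =>
        continuous_const.mul ((continuous_apply i).comp continuous_fst))
    · apply Continuous.mul
      · exact ce.comp (Continuous.neg (continuous_finset_sum _ fun i _ =>
          ((continuous_apply i).comp continuous_snd).mul
            ((continuous_apply i).comp continuous_fst)))
      · exact hf.comp continuous_snd
  have step3 : ∀ u : Fin d → ℚ_[p],
      ∫ ξ in VB (p := p) d N, (e (∑ i, x i * ξ i) : ℂ) * ((e (-(∑ i, u i * ξ i)) : ℂ) * f u) ∂μ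
        = (if ∀ i, ‖x i - u i‖ ≤ (p : ℝ) ^ (-N)
            then (((μ (VB (p := p) d N)).toReal : ℝ) : ℂ) else 0) * f u := by
    intro u
    have hpt : ∀ ξ : Fin d → ℚ_[p],
        (e (∑ i, x i * ξ i) : ℂ) * ((e (-(∑ i, u i * ξ i)) : ℂ) * f u)
          = (e (∑ i, (x i - u i) * ξ i) : ℂ) * f u := by
      intro ξ
      rw [← mul_assoc, ← e_add]
      have harg : (∑ i, x i * ξ i) + -(∑ i, u i * ξ i) = ∑ i, (x i - u i) * ξ i := by
        rw [← sub_eq_add_neg, ← Finset.sum_sub_distrib]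
        exact Finset.sum_congr rfl fun i _ => (sub_mul _ _ _).symm
      rw [harg]
    rw [setIntegral_congr_fun measurableSet_VB (fun ξ _ => hpt ξ), integral_mul_const,
      orth μ e he1 he2 (fun i => x i - u i) N]
  calc ∫ ξ in VB (p := p) d N, (e (∑ i, x i * ξ i) : ℂ) * padicFT μ e f ξ ∂μ
      = ∫ ξ in VB (p := p) d N, ∫ u in VB (p := p) d r,
          (e (∑ i, x i * ξ i) : ℂ) * ((e (-(∑ i, u i * ξ i)) : ℂ) * f u) ∂μ ∂μ := by
        refine setIntegral_congr_fun measurableSet_VB fun ξ _ => ?_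
        show (e (∑ i, x i * ξ i) : ℂ) * padicFT μ e f ξ = _
        rw [ft_eq_setIntegral μ e f r hr ξ, integral_const_mul]
    _ = ∫ u in VB (p := p) d r, ∫ ξ in VB (p := p) d N,
          (e (∑ i, x i * ξ i) : ℂ) * ((e (-(∑ i, u i * ξ i)) : ℂ) * f u) ∂μ ∂μ :=
        swap_int μ μ (isCompact_VB (c := N)) (isCompact_VB (c := r)) _ cF
    _ = ∫ u in VB (p := p) d r, (if ∀ i, ‖x i - u i‖ ≤ (p : ℝ) ^ (-N)
            then (((μ (VB (p := p) d N)).toReal : ℝ) : ℂ) else 0) * f u ∂μ :=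
        setIntegral_congr_fun measurableSet_VB fun u _ => step3 u
    _ = ∫ u in VB (p := p) d r,
          S.indicator (fun u => (((μ (VB (p := p) d N)).toReal : ℝ) : ℂ) * f u) u ∂μ := by
        refine setIntegral_congr_fun measurableSet_VB fun u _ => ?_
        show (if ∀ i, ‖x i - u i‖ ≤ (p : ℝ) ^ (-N) then _ else 0) * f u = _
        by_cases hc : ∀ i, ‖x i - u i‖ ≤ (p : ℝ) ^ (-N)
        · rw [if_pos hc, Set.indicator_of_mem (show u ∈ S from hc)]
        · rw [if_neg hc, Set.indicator_of_notMem (show u ∉ S from hc), zero_mul]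
    _ = ∫ u in VB (p := p) d r ∩ S,
          (((μ (VB (p := p) d N)).toReal : ℝ) : ℂ) * f u ∂μ := setIntegral_indicator hSmeas
    _ = (((μ (VB (p := p) d N)).toReal : ℝ) : ℂ) * ∫ u in VB (p := p) d r ∩ S, f u ∂μ :=
        integral_const_mul _ _
    _ = ((((μ (VB (p := p) d N)).toReal * (μ (VB (p := p) d (-N))).toReal : ℝ)) : ℂ) * f x := by
        by_cases hx : x ∈ VB (p := p) d r
        · have hinter : VB (p := p) d r ∩ S = S := by
            apply Set.inter_eq_right.2
            intro u hu
            have h1 : x - u ∈ VB (p := p) d (-N) := hu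
            have h2 : x - u ∈ VB (p := p) d r := VB_mono (by linarith) h1
            have h3 : u = x - (x - u) := by ring
            rw [h3]
            exact sub_mem_VB hx h2
          rw [hinter]
          have hconst : ∀ u ∈ S, f u = f x := by
            intro u hu
            have h1 : u - x ∈ VB (p := p) d (-m) := by
              apply VB_mono (neg_le_neg hN1)
              have h2 : u - x = -(x - u) := by ring
              rw [h2]
              exact neg_mem_VB hu
            have h3 := hm x (u - x) h1
            rwa [add_sub_cancel] at h3
          rw [setIntegral_congr_fun hSmeas hconst, setIntegral_const]
          have hμS : μ S = μ (VB (p := p) d (-N)) := by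
            have hSeq : S = (fun u => u + (-x)) ⁻¹' (VB (p := p) d (-N)) := by
              ext u
              simp only [Set.mem_preimage]
              constructor
              · intro h i
                show ‖u i + -x i‖ ≤ _
                have h4 : u i + -x i = -(x i - u i) := by ring
                rw [h4, norm_neg]
                exact h i
              · intro h i
                have h5 : ‖u i + -x i‖ ≤ (p : ℝ) ^ (-N) := h i
                have h4 : u i + -x i = -(x i - u i) := by ring
                rw [h4, norm_neg] at h5
                exact h5
            rw [hSeq, measure_preimage_add_right]
          rw [Measure.real, hμS, Complex.real_smul]
          push_cast
          ring
        · have hfx : f x = 0 := by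
            by_contra h
            exact hx (hr x h)
          have hempty : VB (p := p) d r ∩ S = (∅ : Set (Fin d → ℚ_[p])) := by
            ext u
            simp only [Set.mem_inter_iff, Set.mem_empty_iff_false, iff_false, not_and]
            intro hu hS'
            apply hx
            have h1 : x - u ∈ VB (p := p) d r := VB_mono (by linarith) (hS' : x - u ∈ VB (p := p) d (-N))
            have h2 : x = u + (x - u) := by ring
            rw [h2]
            exact add_mem_VB hu h1
          rw [hempty, setIntegral_empty, mul_zero, hfx, mul_zero]

end inversion

section pairing

lemma pairing {n k : ℕ} (B : (Fin k → ℚ_[p]) →ₗ[ℚ_[p]] (Fin n → ℚ_[p]))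
    (y : Fin k → ℚ_[p]) (ξ : Fin n → ℚ_[p]) :
    ∑ j, (B y) j * ξ j = ∑ i, y i * ∑ j, B (Pi.single i 1) j * ξ j := by
  classical
  have hsingle : ∀ i : Fin k,
      (fun j : Fin k => if i = j then (1 : ℚ_[p]) else 0) = Pi.single i 1 := by
    intro i; funext j; simp [Pi.single_apply, eq_comm]
  conv_lhs => rw [LinearMap.pi_apply_eq_sum_univ B y]
  simp only [hsingle, Finset.sum_apply, Pi.smul_apply, smul_eq_mul, Finset.sum_mul,
    Finset.mul_sum, mul_assoc]
  exact Finset.sum_comm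

end pairing

end PFS17

/-- p-adic Fourier slicing.  If a Schwartz–Bruhat `f` on `ℚ_p^n` has Fourier
support in `Ω`, `B : ℚ_p^k → ℚ_p^n` is an injective linear map (a linear isomorphism onto the
`k`-dimensional subspace `H = range B`), and `z ∈ ℚ_p^n`, then the Fourier transform on
`ℚ_p^k` of `f^z(y) = f(B y + z)` is supported in `Bᵀ[Ω]`, where
`(Bᵀ ξ) i = ∑ j, B(e_i)_j ξ_j`. -/
theorem padic_fourier_slicing (p n k : ℕ) [Fact p.Prime]
    [MeasurableSpace ℚ_[p]] [BorelSpace ℚ_[p]]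
    (μn : Measure (Fin n → ℚ_[p])) [μn.IsAddHaarMeasure]
    (hμn : μn {x : Fin n → ℚ_[p] | ∀ i, ‖x i‖ ≤ 1} = 1)
    (μk : Measure (Fin k → ℚ_[p])) [μk.IsAddHaarMeasure]
    (hμk : μk {x : Fin k → ℚ_[p] | ∀ i, ‖x i‖ ≤ 1} = 1)
    (e : AddChar ℚ_[p] Circle) (he1 : ∀ x : ℚ_[p], ‖x‖ ≤ 1 → e x = 1)
    (he2 : ∃ x : ℚ_[p], ‖x‖ ≤ (p : ℝ) ∧ e x ≠ 1)
    (f : (Fin n → ℚ_[p]) → ℂ) (hlc : IsLocallyConstant f) (hcs : HasCompactSupport f)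
    (Ω : Set (Fin n → ℚ_[p])) (hΩ : Function.support (padicFT μn e f) ⊆ Ω)
    (B : (Fin k → ℚ_[p]) →ₗ[ℚ_[p]] (Fin n → ℚ_[p])) (hB : Function.Injective B)
    (z : Fin n → ℚ_[p]) :
    Function.support (padicFT μk e (fun y => f (B y + z))) ⊆
      (fun ξ => fun i : Fin k => ∑ j, B (Pi.single i 1) j * ξ j) '' Ω := by
  classical
  have ce := PFS17.e_cont e he1
  have hf_cont : Continuous f := hlc.continuous
  set fhat : (Fin n → ℚ_[p]) → ℂ := padicFT μn e f with hfhat_def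
  obtain ⟨m, hm⟩ := PFS17.unif_lc f hlc hcs
  have hK : IsCompact (tsupport f) := hcs
  obtain ⟨r, hrts⟩ := PFS17.bounded_subset_VB hK.isBounded
  have hr : ∀ x, f x ≠ 0 → x ∈ PFS17.VB (p := p) n r := fun x hx =>
    hrts (subset_tsupport f hx)
  set N : ℤ := max ((m : ℤ) + 1) (-r) with hN_def
  have hN1 : (m : ℤ) ≤ N := le_trans (by linarith) (le_max_left _ _)
  have hN2 : -r ≤ N := le_max_right _ _
  have hfhat_lc : IsLocallyConstant fhat := PFS17.ft_isLocallyConstant μn e he1 f r hr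
  have hfhat_cont : Continuous fhat := hfhat_lc.continuous
  set c : ℝ := (μn (PFS17.VB (p := p) n N)).toReal * (μn (PFS17.VB (p := p) n (-N))).toReal
    with hc_def
  have hcpos : 0 < c := by
    apply mul_pos <;>
    · apply ENNReal.toReal_pos
      · exact (PFS17.isOpen_VB.measure_pos μn ⟨0, PFS17.zero_mem_VB _⟩).ne'
      · exact (PFS17.isCompact_VB.measure_lt_top).ne
  have hinv := PFS17.inversion μn e he1 he2 f hf_cont m r N hm hr hN1 hN2
  have hB_cont : Continuous B := B.continuous_of_finiteDimensional
  obtain ⟨L, hL⟩ := B.exists_leftInverse_of_injective (LinearMap.ker_eq_bot.2 hB)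
  have hgbdd : Bornology.IsBounded {y : Fin k → ℚ_[p] | f (B y + z) ≠ 0} := by
    have hsub : {y : Fin k → ℚ_[p] | f (B y + z) ≠ 0}
        ⊆ L '' ((fun w => w - z) '' tsupport f) := by
      intro y hy
      refine ⟨B y, ⟨B y + z, subset_tsupport _ hy, add_sub_cancel_right _ _⟩, ?_⟩
      exact LinearMap.congr_fun hL y
    exact (((hK.image (continuous_id.sub continuous_const)).image
      L.continuous_of_finiteDimensional).isBounded).subset hsub
  obtain ⟨R, hR⟩ := PFS17.bounded_subset_VB hgbdd
  intro η hη
  rw [Function.mem_support] at hη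
  set T : (Fin n → ℚ_[p]) → (Fin k → ℚ_[p]) :=
    fun ξ => fun i : Fin k => ∑ j, B (Pi.single i 1) j * ξ j with hT_def
  have key : ∀ jj : ℕ, ∃ ξ, ξ ∈ PFS17.VB (p := p) n N ∧ fhat ξ ≠ 0 ∧
      ∀ i, ‖T ξ i - η i‖ ≤ (p : ℝ) ^ (-(R + jj : ℤ)) := by
    intro jj
    set Rj : ℤ := R + jj with hRj_def
    have cF : Continuous (Function.uncurry fun (y : Fin k → ℚ_[p]) (ξ : Fin n → ℚ_[p]) =>
        (e (-(∑ i, y i * η i)) : ℂ) * ((e (∑ i, (B y + z) i * ξ i) : ℂ) * fhat ξ)) := by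
      apply Continuous.mul
      · exact ce.comp (Continuous.neg (continuous_finset_sum _ fun i _ =>
          ((continuous_apply i).comp continuous_fst).mul continuous_const))
      · apply Continuous.mul
        · refine ce.comp (continuous_finset_sum _ fun i _ => Continuous.mul ?_
            ((continuous_apply i).comp continuous_snd))
          exact (continuous_apply i).comp ((hB_cont.comp continuous_fst).add continuous_const)
        · exact hfhat_cont.comp continuous_snd
    have e1 : (c : ℂ) * padicFT μk e (fun y => f (B y + z)) η
        = ∫ ξ in PFS17.VB (p := p) n N,
            (if ∀ i, ‖T ξ i - η i‖ ≤ (p : ℝ) ^ (-Rj)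
              then (((μk (PFS17.VB (p := p) k Rj)).toReal : ℝ) : ℂ) else 0) *
              ((e (∑ i, z i * ξ i) : ℂ) * fhat ξ) ∂μn := by
      calc (c : ℂ) * padicFT μk e (fun y => f (B y + z)) η
          = (c : ℂ) * ∫ y in PFS17.VB (p := p) k Rj,
              (e (-(∑ i, y i * η i)) : ℂ) * f (B y + z) ∂μk := by
            congr 1
            refine (setIntegral_eq_integral_of_forall_compl_eq_zero fun y hy => ?_).symm
            have hfy : f (B y + z) = 0 := by
              by_contra hcon
              exact hy (PFS17.VB_mono (le_add_of_nonneg_right (Int.natCast_nonneg jj))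
                (hR hcon))
            show (e (-(∑ i, y i * η i)) : ℂ) * f (B y + z) = 0
            rw [hfy, mul_zero]
        _ = ∫ y in PFS17.VB (p := p) k Rj,
              (e (-(∑ i, y i * η i)) : ℂ) * ((c : ℂ) * f (B y + z)) ∂μk := by
            rw [← integral_const_mul]
            refine setIntegral_congr_fun PFS17.measurableSet_VB fun y _ => ?_
            show (c : ℂ) * ((e (-(∑ i, y i * η i)) : ℂ) * f (B y + z)) = _
            ring
        _ = ∫ y in PFS17.VB (p := p) k Rj, (e (-(∑ i, y i * η i)) : ℂ) *
              (∫ ξ in PFS17.VB (p := p) n N,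
                (e (∑ i, (B y + z) i * ξ i) : ℂ) * fhat ξ ∂μn) ∂μk := by
            refine setIntegral_congr_fun PFS17.measurableSet_VB fun y _ => ?_
            show (e (-(∑ i, y i * η i)) : ℂ) * ((c : ℂ) * f (B y + z)) = _
            rw [hinv (B y + z), hc_def]
        _ = ∫ y in PFS17.VB (p := p) k Rj, ∫ ξ in PFS17.VB (p := p) n N,
              (e (-(∑ i, y i * η i)) : ℂ) *
                ((e (∑ i, (B y + z) i * ξ i) : ℂ) * fhat ξ) ∂μn ∂μk := by
            refine setIntegral_congr_fun PFS17.measurableSet_VB fun y _ => ?_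
            show (e (-(∑ i, y i * η i)) : ℂ) * _ = _
            exact (integral_const_mul _ _).symm
        _ = ∫ ξ in PFS17.VB (p := p) n N, ∫ y in PFS17.VB (p := p) k Rj,
              (e (-(∑ i, y i * η i)) : ℂ) *
                ((e (∑ i, (B y + z) i * ξ i) : ℂ) * fhat ξ) ∂μk ∂μn :=
            PFS17.swap_int μk μn PFS17.isCompact_VB PFS17.isCompact_VB _ cF
        _ = ∫ ξ in PFS17.VB (p := p) n N,
              (if ∀ i, ‖T ξ i - η i‖ ≤ (p : ℝ) ^ (-Rj)
                then (((μk (PFS17.VB (p := p) k Rj)).toReal : ℝ) : ℂ) else 0) *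
                ((e (∑ i, z i * ξ i) : ℂ) * fhat ξ) ∂μn := by
            refine setIntegral_congr_fun PFS17.measurableSet_VB fun ξ _ => ?_
            show (∫ y in PFS17.VB (p := p) k Rj,
              (e (-(∑ i, y i * η i)) : ℂ) *
                ((e (∑ i, (B y + z) i * ξ i) : ℂ) * fhat ξ) ∂μk) = _
            have hpt : ∀ y : Fin k → ℚ_[p],
                (e (-(∑ i, y i * η i)) : ℂ) *
                  ((e (∑ i, (B y + z) i * ξ i) : ℂ) * fhat ξ)
                = (e (∑ i, (T ξ i - η i) * y i) : ℂ) *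
                    ((e (∑ i, z i * ξ i) : ℂ) * fhat ξ) := by
              intro y
              rw [← mul_assoc, ← PFS17.e_add, ← mul_assoc, ← PFS17.e_add]
              have hsplit : ∑ i, (B y + z) i * ξ i
                  = (∑ i, (B y) i * ξ i) + ∑ i, z i * ξ i := by
                rw [← Finset.sum_add_distrib]
                refine Finset.sum_congr rfl fun i _ => ?_
                show ((B y) i + z i) * ξ i = _
                ring
              have hpair : ∑ i, (B y) i * ξ i = ∑ i, y i * T ξ i := PFS17.pairing B y ξ
              have hTsum : ∑ i, (T ξ i - η i) * y i
                  = (∑ i, y i * T ξ i) - ∑ i, y i * η i := by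
                rw [← Finset.sum_sub_distrib]
                exact Finset.sum_congr rfl fun i _ => by ring
              have harg : -(∑ i, y i * η i) + ∑ i, (B y + z) i * ξ i
                  = (∑ i, (T ξ i - η i) * y i) + ∑ i, z i * ξ i := by
                rw [hsplit, hpair, hTsum]
                ring
              rw [harg]
            rw [setIntegral_congr_fun PFS17.measurableSet_VB (fun y _ => hpt y),
              integral_mul_const,
              PFS17.orth μk e he1 he2 (fun i => T ξ i - η i) Rj]
    by_contra hno
    push_neg at hno
    have hzero : ∫ ξ in PFS17.VB (p := p) n N,
        (if ∀ i, ‖T ξ i - η i‖ ≤ (p : ℝ) ^ (-Rj)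
          then (((μk (PFS17.VB (p := p) k Rj)).toReal : ℝ) : ℂ) else 0) *
          ((e (∑ i, z i * ξ i) : ℂ) * fhat ξ) ∂μn = 0 := by
      refine setIntegral_eq_zero_of_forall_eq_zero fun ξ hξ => ?_
      by_cases hfξ : fhat ξ = 0
      · rw [hfξ, mul_zero, mul_zero]
      · obtain ⟨i, hi⟩ := hno ξ hξ hfξ
        rw [if_neg (fun hall => absurd (hall i) (not_le.2 hi)), zero_mul]
    rw [hzero] at e1
    have hc0 : (c : ℂ) ≠ 0 := by exact_mod_cast ne_of_gt hcpos
    exact absurd ((mul_eq_zero.1 e1).resolve_left hc0) hη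
  set C : ℕ → Set (Fin n → ℚ_[p]) := fun jj =>
    (PFS17.VB (p := p) n N ∩ Function.support fhat) ∩
      {ξ | ∀ i, ‖T ξ i - η i‖ ≤ (p : ℝ) ^ (-(R + jj : ℤ))} with hC_def
  have hT_cont : Continuous T := continuous_pi fun i =>
    continuous_finset_sum _ fun j _ => continuous_const.mul (continuous_apply j)
  have hWclosed : ∀ jj : ℕ,
      IsClosed {ξ : Fin n → ℚ_[p] | ∀ i, ‖T ξ i - η i‖ ≤ (p : ℝ) ^ (-(R + jj : ℤ))} := by
    intro jj
    have h0 : {ξ : Fin n → ℚ_[p] | ∀ i, ‖T ξ i - η i‖ ≤ (p : ℝ) ^ (-(R + jj : ℤ))}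
        = ⋂ i, {ξ : Fin n → ℚ_[p] | ‖T ξ i - η i‖ ≤ (p : ℝ) ^ (-(R + jj : ℤ))} := by
      ext ξ; simp [Set.mem_iInter]
    rw [h0]
    exact isClosed_iInter fun i => isClosed_le
      ((((continuous_apply i).comp hT_cont).sub continuous_const).norm) continuous_const
  have hsupp_closed : IsClosed (Function.support fhat) := by
    have h0 : Function.support fhat = (fhat ⁻¹' {0})ᶜ := by
      ext ξ; simp [Function.mem_support]
    rw [h0]
    exact (hfhat_lc {0}).isClosed_compl
  have hCclosed : ∀ jj, IsClosed (C jj) := fun jj =>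
    (PFS17.isClosed_VB.inter hsupp_closed).inter (hWclosed jj)
  have hCcomp : ∀ jj, IsCompact (C jj) := fun jj =>
    PFS17.isCompact_VB.of_isClosed_subset (hCclosed jj) fun ξ hξ => hξ.1.1
  have hCne : ∀ jj, (C jj).Nonempty := fun jj => by
    obtain ⟨ξ, h1, h2, h3⟩ := key jj
    exact ⟨ξ, ⟨⟨h1, h2⟩, h3⟩⟩
  have hCdir : Directed (· ⊇ ·) C := by
    intro a b
    refine ⟨max a b, fun ξ hξ => ⟨hξ.1, fun i => le_trans (hξ.2 i) ?_⟩,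
      fun ξ hξ => ⟨hξ.1, fun i => le_trans (hξ.2 i) ?_⟩⟩
    · apply zpow_le_zpow_right₀ (PFS17.one_lt_p (p := p)).le
      have : (a : ℤ) ≤ ((max a b : ℕ) : ℤ) := by exact_mod_cast le_max_left a b
      linarith
    · apply zpow_le_zpow_right₀ (PFS17.one_lt_p (p := p)).le
      have : (b : ℤ) ≤ ((max a b : ℕ) : ℤ) := by exact_mod_cast le_max_right a b
      linarith
  obtain ⟨ξ₀, hξ₀⟩ :=
    IsCompact.nonempty_iInter_of_directed_nonempty_isCompact_isClosed C hCdir hCne hCcomp hCclosed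
  simp only [Set.mem_iInter] at hξ₀
  have hξΩ : ξ₀ ∈ Ω := hΩ ((hξ₀ 0).1.2)
  refine ⟨ξ₀, hξΩ, ?_⟩
  show T ξ₀ = η
  funext i
  have hbound : ∀ jj : ℕ, ‖T ξ₀ i - η i‖ ≤ (p : ℝ) ^ (-(R + jj : ℤ)) := fun jj => (hξ₀ jj).2 i
  by_contra hne
  have hpos : 0 < ‖T ξ₀ i - η i‖ := by
    rw [norm_pos_iff]
    exact sub_ne_zero.2 hne
  obtain ⟨jj, hjj⟩ := exists_pow_lt_of_lt_one
    (mul_pos hpos (PFS17.zpow_p_pos (p := p) R)) (inv_lt_one_of_one_lt₀ (PFS17.one_lt_p (p := p)))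
  have hcomp : (p : ℝ) ^ (-(R + jj : ℤ)) < ‖T ξ₀ i - η i‖ := by
    have h2 : (p : ℝ) ^ (-(R + jj : ℤ)) = (p : ℝ) ^ (-R) * ((p : ℝ)⁻¹) ^ jj := by
      rw [neg_add, zpow_add₀ (ne_of_gt (PFS17.p_pos (p := p)))]
      congr 1
      rw [zpow_neg, zpow_natCast, inv_pow]
    rw [h2]
    calc (p : ℝ) ^ (-R) * ((p : ℝ)⁻¹) ^ jj
        < (p : ℝ) ^ (-R) * (‖T ξ₀ i - η i‖ * (p : ℝ) ^ R) :=
          mul_lt_mul_of_pos_left hjj (PFS17.zpow_p_pos _)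
      _ = ‖T ξ₀ i - η i‖ := by
          rw [show (p : ℝ) ^ (-R) * (‖T ξ₀ i - η i‖ * (p : ℝ) ^ R)
              = ‖T ξ₀ i - η i‖ * ((p : ℝ) ^ (-R) * (p : ℝ) ^ R) from by ring,
            show ((p : ℝ) ^ (-R) * (p : ℝ) ^ R) = 1 from by
              rw [← zpow_add₀ (ne_of_gt (PFS17.p_pos (p := p)))]; simp,
            mul_one]
  exact absurd (hbound jj) (not_le.2 hcomp)
end
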